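/- (Surjectivity of {X ∈ 𝔤 : W ⊆ ker X} onto 𝔰𝔬(V/W, η̄).) For every endomorphism X₀ of V such that X₀(W) ⊆ W and η(X₀ v, v') + η(v, X₀ v') = 0 for all v, v' ∈ V, there exists X ∈ 𝔤 with W ⊆ ker X and X(v) − X₀(v) ∈ W for all v ∈ V; in other words, every η̄-skew endomorphism of the quotient V/W (where η̄ is the nondegenerate form induced by η on V/W) is induced by an element of 𝔤 vanishing on W. -/

import Mathlib

/-- Membership in the Lie algebra `𝔤`. -/
def InG {V : Type*} [AddCommGroup V] [Module ℝ V]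
    (η : V →ₗ[ℝ] V →ₗ[ℝ] ℝ)
    (h : Module.Dual ℝ V →ₗ[ℝ] Module.Dual ℝ V →ₗ[ℝ] ℝ)
    (X : V →ₗ[ℝ] V) : Prop :=
  (∀ v v' : V, η (X v) v' + η v (X v') = 0) ∧
  (∀ α α' : Module.Dual ℝ V, h (α ∘ₗ X) α' + h α (α' ∘ₗ X) = 0)

/-- Every `η̄`-skew endomorphism of `V/W` (represented by an
endomorphism `X₀` of `V` preserving `W` and infinitesimally `η`-skew) is induced
by an element of `𝔤` vanishing on `W`. -/
theorem g_onto_so_quotient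
    {V : Type*} [AddCommGroup V] [Module ℝ V] [FiniteDimensional ℝ V]
    (W : Submodule ℝ V)
    (η : V →ₗ[ℝ] V →ₗ[ℝ] ℝ)
    (hη_symm : ∀ v v' : V, η v v' = η v' v)
    (hη_rad : ∀ v : V, (∀ v' : V, η v v' = 0) ↔ v ∈ W)
    (h : Module.Dual ℝ V →ₗ[ℝ] Module.Dual ℝ V →ₗ[ℝ] ℝ)
    (hh_symm : ∀ α α' : Module.Dual ℝ V, h α α' = h α' α)
    (hh_rad : ∀ α : Module.Dual ℝ V,
      (∀ α' : Module.Dual ℝ V, h α α' = 0) ↔ α ∈ W.dualAnnihilator)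
    (X₀ : V →ₗ[ℝ] V)
    (hX₀W : ∀ w : V, w ∈ W → X₀ w ∈ W)
    (hX₀skew : ∀ v v' : V, η (X₀ v) v' + η v (X₀ v') = 0) :
    ∃ X : V →ₗ[ℝ] V, InG η h X ∧ W ≤ LinearMap.ker X ∧
      ∀ v : V, X v - X₀ v ∈ W := by
  obtain ⟨U, hU⟩ := Submodule.exists_isCompl W
  set π : V →ₗ[ℝ] V := U.subtype ∘ₗ (U.projectionOnto W hU.symm) with hπdef
  have hπW : ∀ w ∈ W, π w = 0 := by
    intro w hw
    simp [hπdef, Submodule.projectionOnto_apply_of_mem_right hU.symm hw]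
  have hπv : ∀ v : V, v - π v ∈ W := by
    intro v
    have := Submodule.projection_add_projection_eq_self hU.symm v
    have h2 : v - π v = (W.linearProjOfIsCompl U hU v : V) := by
      simp only [hπdef, LinearMap.comp_apply, Submodule.subtype_apply]
      exact sub_eq_of_eq_add' this.symm
    rw [h2]; exact (W.linearProjOfIsCompl U hU v).2
  have hηW : ∀ v w : V, w ∈ W → η v w = 0 := by
    intro v w hw
    rw [hη_symm]; exact (hη_rad w).mpr hw v
  have hηW' : ∀ w v : V, w ∈ W → η w v = 0 := fun w v hw => (hη_rad w).mpr hw v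
  have hηsub : ∀ a b : V, a - b ∈ W → ∀ v : V, η a v = η b v := by
    intro a b hab v
    have : η (a - b) v = 0 := hηW' _ _ hab
    rw [map_sub] at this
    simp only [LinearMap.sub_apply] at this
    linarith
  have hηsub' : ∀ v a b : V, a - b ∈ W → η v a = η v b := by
    intro v a b hab
    rw [hη_symm v a, hη_symm v b]; exact hηsub a b hab v
  refine ⟨π ∘ₗ X₀ ∘ₗ π, ⟨?_, ?_⟩, ?_, ?_⟩
  · intro v v'
    have e1 : η (π (X₀ (π v))) v' = η (X₀ (π v)) v' := by
      refine hηsub _ _ ?_ v'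
      have := hπv (X₀ (π v))
      have h2 : π (X₀ (π v)) - X₀ (π v) = -(X₀ (π v) - π (X₀ (π v))) := by abel
      rw [h2]; exact neg_mem (hπv _)
    have e2 : η (X₀ (π v)) v' = η (X₀ v) v' := by
      refine hηsub _ _ ?_ v'
      have : π v - v ∈ W := by
        have h2 : π v - v = -(v - π v) := by abel
        rw [h2]; exact neg_mem (hπv v)
      have h3 : X₀ (π v) - X₀ v = X₀ (π v - v) := by rw [map_sub]
      rw [h3]; exact hX₀W _ this
    have e3 : η v (π (X₀ (π v'))) = η v (X₀ v') := by
      have s1 : η v (π (X₀ (π v'))) = η v (X₀ (π v')) := by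
        refine hηsub' v _ _ ?_
        have h2 : π (X₀ (π v')) - X₀ (π v') = -(X₀ (π v') - π (X₀ (π v'))) := by abel
        rw [h2]; exact neg_mem (hπv _)
      have s2 : η v (X₀ (π v')) = η v (X₀ v') := by
        refine hηsub' v _ _ ?_
        have h3 : X₀ (π v') - X₀ v' = X₀ (π v' - v') := by rw [map_sub]
        have : π v' - v' = -(v' - π v') := by abel
        rw [h3, this, map_neg]
        exact neg_mem (hX₀W _ (hπv v'))
      rw [s1, s2]
    simp only [LinearMap.comp_apply]
    rw [e1, e2, e3]
    exact hX₀skew v v'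
  · intro α α'
    have hker : ∀ w ∈ W, (π ∘ₗ X₀ ∘ₗ π) w = 0 := by
      intro w hw
      simp [LinearMap.comp_apply, hπW w hw]
    have hann : ∀ β : Module.Dual ℝ V, β ∘ₗ (π ∘ₗ X₀ ∘ₗ π) ∈ W.dualAnnihilator := by
      intro β
      rw [Submodule.mem_dualAnnihilator]
      intro w hw
      simp [LinearMap.comp_apply, hπW w hw]
    have t1 : h (α ∘ₗ (π ∘ₗ X₀ ∘ₗ π)) α' = 0 := (hh_rad _).mpr (hann α) α'
    have t2 : h α (α' ∘ₗ (π ∘ₗ X₀ ∘ₗ π)) = 0 := by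
      rw [hh_symm]; exact (hh_rad _).mpr (hann α') α
    rw [t1, t2]; ring
  · intro w hw
    simp [LinearMap.mem_ker, LinearMap.comp_apply, hπW w hw]
  · intro v
    have h1 : π (X₀ (π v)) - X₀ (π v) ∈ W := by
      have h2 : π (X₀ (π v)) - X₀ (π v) = -(X₀ (π v) - π (X₀ (π v))) := by abel
      rw [h2]; exact neg_mem (hπv _)
    have h3 : X₀ (π v) - X₀ v ∈ W := by
      have : X₀ (π v) - X₀ v = -(X₀ (v - π v)) := by rw [map_sub]; abel
      rw [this]; exact neg_mem (hX₀W _ (hπv v))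
    have : (π ∘ₗ X₀ ∘ₗ π) v - X₀ v =
        (π (X₀ (π v)) - X₀ (π v)) + (X₀ (π v) - X₀ v) := by
      simp only [LinearMap.comp_apply]; abel
    rw [this]; exact add_mem h1 h3
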